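/- With φ_{y,ε} as above and F⁻¹ the one-dimensional inverse Fourier transform, the function F⁻¹φ_{y,ε} is strictly positive on the open interval (x̂·y − ε − t_max, x̂·y + ε − t_min) and vanishes outside this interval. -/

import Mathlib

open MeasureTheory Complex
open scoped RealInnerProductSpace

noncomputable section

abbrev E3 := EuclideanSpace ℝ (Fin 3)

def phase (τ ξ : ℝ) : ℂ := Complex.exp (-Complex.I * τ * ξ)


lemma phase_norm (τ ξ : ℝ) : ‖phase τ ξ‖ = 1 := by
  simp [phase, Complex.norm_exp]

lemma phase_sub (τ ξ t : ℝ) : phase τ (ξ - t) = phase τ ξ * phase τ (-t) := by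
  rw [phase, phase, phase, ← Complex.exp_add]
  congr 1
  push_cast
  ring

lemma phase_continuous (τ : ℝ) : Continuous (phase τ) := by
  unfold phase
  fun_prop

lemma slice_lem (xhat : E3) (hx : ‖xhat‖ = 1) (c : E3) (ε : ℝ) (hε : 0 < ε)
    (f : ℝ → ℂ) (hf : Measurable f) (M : ℝ) (hM : ∀ u, ‖f u‖ ≤ M) :
    ∫ z in Metric.ball c ε, f ⟪xhat, z⟫ =
      ∫ u : ℝ, f u * ((Real.pi * max 0 (ε ^ 2 - (u - ⟪xhat, c⟫) ^ 2) : ℝ) : ℂ) := by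
  have hon : Orthonormal ℝ (({0} : Set (Fin 3)).restrict (fun _ : Fin 3 => xhat)) := by
    refine ⟨fun i => hx, fun i j hij => absurd (Subtype.ext ?_) hij⟩
    have hi : (i : Fin 3) = 0 := i.2
    have hj : (j : Fin 3) = 0 := j.2
    rw [hi, hj]
  obtain ⟨b, hb⟩ := hon.exists_orthonormalBasis_extension_of_card_eq (by simp)
  have hb0 : b 0 = xhat := hb 0 rfl
  have h1 : ∀ z : E3, ⟪xhat, z⟫ = b.repr z 0 := fun z => by
    rw [b.repr_apply_apply, hb0]
  set c' : EuclideanSpace ℝ (Fin 3) := b.repr c with hc'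
  have e1 : ∫ z in Metric.ball c ε, f ⟪xhat, z⟫ =
      ∫ w in Metric.ball c' ε, f (w 0) := by
    have hpre : Metric.ball c ε = b.repr ⁻¹' (Metric.ball c' ε) := by
      ext z
      simp [Metric.mem_ball, hc', b.repr.dist_map]
    rw [hpre, show (fun z : E3 => f ⟪xhat, z⟫) = fun z => (fun w : EuclideanSpace ℝ (Fin 3) => f (w 0)) (b.repr z) from funext fun z => by rw [h1]]
    exact b.repr.measurePreserving.setIntegral_preimage_emb
      b.repr.toHomeomorph.measurableEmbedding (fun w => f (w 0)) _
  set T : Set (Fin 3 → ℝ) := {p | ∑ i, (p i - c' i) ^ 2 < ε ^ 2} with hT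
  have hTm : MeasurableSet T := by
    apply measurableSet_lt (by fun_prop) measurable_const
  have hpreT : ((MeasurableEquiv.toLp 2 (Fin 3 → ℝ)).symm) ⁻¹' T = Metric.ball c' ε := by
    ext w
    simp only [Set.mem_preimage, hT, Set.mem_setOf_eq, Metric.mem_ball]
    rw [EuclideanSpace.dist_eq, Real.sqrt_lt' hε]
    simp [Real.dist_eq, sq_abs]
  have e2 : ∫ w in Metric.ball c' ε, f (w 0) =
      ∫ p in T, f (p 0) ∂(volume : Measure (Fin 3 → ℝ)) := by
    rw [← hpreT]
    exact (EuclideanSpace.volume_preserving_symm_measurableEquiv_toLp (Fin 3)).setIntegral_preimage_emb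
      ((MeasurableEquiv.toLp 2 (Fin 3 → ℝ)).symm).measurableEmbedding (fun p => f (p 0)) T
  set q := MeasurableEquiv.piFinSuccAbove (fun _ : Fin 3 => ℝ) 0 with hq
  have hqmp : MeasurePreserving q (volume : Measure (Fin 3 → ℝ))
      ((volume : Measure ℝ).prod (volume : Measure (Fin 2 → ℝ))) :=
    measurePreserving_piFinSuccAbove (fun _ => volume) 0
  set T' : Set (ℝ × (Fin 2 → ℝ)) :=
    {x | (x.1 - c' 0) ^ 2 + ∑ j : Fin 2, (x.2 j - c' j.succ) ^ 2 < ε ^ 2} with hT'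
  have hT'm : MeasurableSet T' := by
    apply measurableSet_lt (by fun_prop) measurable_const
  have hpreT' : q ⁻¹' T' = T := by
    ext p
    simp only [Set.mem_preimage, hT', hT, Set.mem_setOf_eq]
    have : ((q p).1 - c' 0) ^ 2 + ∑ j : Fin 2, ((q p).2 j - c' j.succ) ^ 2
        = ∑ i, (p i - c' i) ^ 2 := by
      rw [Fin.sum_univ_succ]
      rfl
    rw [this]
  have e3 : ∫ p in T, f (p 0) ∂(volume : Measure (Fin 3 → ℝ)) =
      ∫ x in T', f x.1 ∂((volume : Measure ℝ).prod (volume : Measure (Fin 2 → ℝ))) := by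
    rw [← hpreT']
    exact hqmp.setIntegral_preimage_emb q.measurableEmbedding (fun x => f x.1) T'
  have hfin : ((volume : Measure ℝ).prod (volume : Measure (Fin 2 → ℝ))) T' < ⊤ := by
    rw [← hqmp.measure_preimage hT'm.nullMeasurableSet, hpreT',
      ← (EuclideanSpace.volume_preserving_symm_measurableEquiv_toLp (Fin 3)).measure_preimage
        hTm.nullMeasurableSet, hpreT]
    exact measure_ball_lt_top
  have hint : IntegrableOn (fun x : ℝ × (Fin 2 → ℝ) => f x.1) T'
      ((volume : Measure ℝ).prod (volume : Measure (Fin 2 → ℝ))) := by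
    refine Measure.integrableOn_of_bounded (M := M) hfin.ne
      ((hf.comp measurable_fst).aestronglyMeasurable) ?_
    exact Filter.Eventually.of_forall fun x => hM x.1
  have e4 : ∫ x in T', f x.1 ∂((volume : Measure ℝ).prod (volume : Measure (Fin 2 → ℝ))) =
      ∫ u : ℝ, ∫ w : Fin 2 → ℝ, T'.indicator (fun x : ℝ × (Fin 2 → ℝ) => f x.1) (u, w) := by
    rw [← integral_indicator hT'm]
    exact integral_prod _ ((integrable_indicator_iff hT'm).mpr hint)
  have e5 : ∀ u : ℝ, (∫ w : Fin 2 → ℝ, T'.indicator (fun x : ℝ × (Fin 2 → ℝ) => f x.1) (u, w))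
      = (Real.pi * max 0 (ε ^ 2 - (u - c' 0) ^ 2)) • f u := by
    intro u
    set R := ε ^ 2 - (u - c' 0) ^ 2 with hR
    set sec : Set (Fin 2 → ℝ) := {w | ∑ j : Fin 2, (w j - c' j.succ) ^ 2 < R} with hsec
    have hsecm : MeasurableSet sec := measurableSet_lt (by fun_prop) measurable_const
    have hind : ∀ w, T'.indicator (fun x : ℝ × (Fin 2 → ℝ) => f x.1) (u, w)
        = sec.indicator (fun _ => f u) w := by
      intro w
      simp only [Set.indicator_apply]
      have hiff : (u, w) ∈ T' ↔ w ∈ sec := by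
        simp only [hT', hsec, Set.mem_setOf_eq, hR]
        constructor <;> intro h <;> linarith
      rw [if_congr hiff rfl rfl]
    simp_rw [hind]
    rw [integral_indicator hsecm, setIntegral_const]
    congr 1
    rcases le_or_gt R 0 with h | h
    · have hemp : sec = ∅ := by
        refine Set.eq_empty_iff_forall_notMem.mpr fun w hw => absurd hw ?_
        simp only [hsec, Set.mem_setOf_eq, not_lt]
        exact le_trans h (Finset.sum_nonneg fun j _ => sq_nonneg _)
      rw [hemp, measureReal_empty, max_eq_left h]
      simp
    · have hpre2 : ((MeasurableEquiv.toLp 2 (Fin 2 → ℝ)).symm) ⁻¹' sec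
          = Metric.ball (WithLp.toLp 2 (fun j : Fin 2 => c' j.succ) : EuclideanSpace ℝ (Fin 2))
            (Real.sqrt R) := by
        ext w
        simp only [Set.mem_preimage, hsec, Set.mem_setOf_eq, Metric.mem_ball]
        rw [EuclideanSpace.dist_eq, Real.sqrt_lt' (Real.sqrt_pos.mpr h), Real.sq_sqrt h.le]
        simp [Real.dist_eq, sq_abs]
      have hvol : (volume : Measure (Fin 2 → ℝ)) sec = ENNReal.ofReal (Real.pi * R) := by
        rw [← (EuclideanSpace.volume_preserving_symm_measurableEquiv_toLp (Fin 2)).measure_preimage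
            hsecm.nullMeasurableSet, hpre2, EuclideanSpace.volume_ball, Fintype.card_fin]
        rw [show ((2:ℕ):ℝ)/2 + 1 = 2 by norm_num, Real.Gamma_two, div_one,
          Real.sq_sqrt Real.pi_nonneg, ← ENNReal.ofReal_pow (Real.sqrt_nonneg _),
          Real.sq_sqrt h.le, ← ENNReal.ofReal_mul h.le, mul_comm]
      rw [measureReal_def, hvol, max_eq_right h.le, ENNReal.toReal_ofReal (by positivity)]
  rw [e1, e2, e3, e4]
  have h1c : (⟪xhat, c⟫ : ℝ) = c' 0 := h1 c
  rw [h1c]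
  congr 1
  funext u
  rw [e5 u, Complex.real_smul, mul_comm]


theorem stmt_10 (y : E3) (xhat : E3) (hx : ‖xhat‖ = 1) (ε : ℝ) (hε : 0 < ε)
    (tmin tmax : ℝ) (htmin : 0 ≤ tmin) (ht : tmin < tmax)
    -- the test function `φ_{y,ε}` (extended to all `τ ∈ ℝ`):
    (φeps : ℝ → ℂ)
    (hφ : ∀ τ : ℝ, φeps τ =
      (((tmax - tmin) * (volume (Metric.ball y ε)).toReal : ℝ) : ℂ)⁻¹ *
        ∫ t in Set.Ioo tmin tmax, ∫ z in Metric.ball y ε, phase τ (⟪xhat, z⟫ - t))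
    -- `g_ε`, built out of the areas `π(ε² - (t - x̂·y)²)₊` of the planar
    -- cross-sections `{z ∈ B_ε(y) : x̂·z = t}`:
    (g : ℝ → ℝ)
    (hg : ∀ ξ : ℝ, g ξ =
      ((tmax - tmin) * (volume (Metric.ball y ε)).toReal)⁻¹ *
        ∫ t in Set.Ioo (ξ + tmin) (ξ + tmax),
          Real.pi * max 0 (ε ^ 2 - (t - ⟪xhat, y⟫) ^ 2)) :
    -- `g` is the inverse Fourier transform of `φ_{y,ε}` (up to the factor `√(2π)`):
    (∀ τ : ℝ, φeps τ = ∫ ξ : ℝ, phase τ ξ * (g ξ : ℂ)) ∧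
    -- `𝓕⁻¹ φ_{y,ε} = √(2π) g` is strictly positive on the open interval:
    (∀ ξ ∈ Set.Ioo (⟪xhat, y⟫ - ε - tmax) (⟪xhat, y⟫ + ε - tmin),
      0 < Real.sqrt (2 * Real.pi) * g ξ) ∧
    -- and vanishes outside it:
    (∀ ξ : ℝ, ξ ∉ Set.Ioo (⟪xhat, y⟫ - ε - tmax) (⟪xhat, y⟫ + ε - tmin) →
      Real.sqrt (2 * Real.pi) * g ξ = 0) := by
  set a : ℝ := ⟪xhat, y⟫ with ha
  set C : ℝ := (tmax - tmin) * (volume (Metric.ball y ε)).toReal with hC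
  have hCpos : 0 < C := mul_pos (sub_pos.mpr ht)
    (ENNReal.toReal_pos (Metric.measure_ball_pos volume y hε).ne' measure_ball_lt_top.ne)
  have hAnn : ∀ t : ℝ, 0 ≤ Real.pi * max 0 (ε ^ 2 - (t - a) ^ 2) :=
    fun t => mul_nonneg Real.pi_nonneg (le_max_left _ _)
  have hAbd : ∀ t : ℝ, Real.pi * max 0 (ε ^ 2 - (t - a) ^ 2) ≤ Real.pi * ε ^ 2 := by
    intro t
    refine mul_le_mul_of_nonneg_left (max_le (by positivity) ?_) Real.pi_nonneg
    nlinarith [sq_nonneg (t - a)]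
  have hAzero : ∀ t : ℝ, ε ^ 2 ≤ (t - a) ^ 2 →
      Real.pi * max 0 (ε ^ 2 - (t - a) ^ 2) = 0 := by
    intro t hle
    rw [max_eq_left (by linarith), mul_zero]
  have hAcont : Continuous (fun t : ℝ => Real.pi * max 0 (ε ^ 2 - (t - a) ^ 2)) :=
    continuous_const.mul (continuous_const.max (by fun_prop))
  -- vanishing of `g` outside the interval
  have gvanish : ∀ ξ : ℝ, ξ ∉ Set.Ioo (a - ε - tmax) (a + ε - tmin) → g ξ = 0 := by
    intro ξ hξ
    rw [hg ξ]
    have hz : (∫ t in Set.Ioo (ξ + tmin) (ξ + tmax),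
        Real.pi * max 0 (ε ^ 2 - (t - a) ^ 2)) = 0 := by
      apply setIntegral_eq_zero_of_forall_eq_zero
      intro t htt
      rcases Set.mem_Ioo.mp htt with ⟨h1, h2⟩
      rw [Set.mem_Ioo, not_and_or, not_lt, not_lt] at hξ
      rcases hξ with hle | hle
      · exact hAzero t (by nlinarith)
      · exact hAzero t (by nlinarith)
    rw [hz, mul_zero]
  refine ⟨?_, ?_, ?_⟩
  · -- the Fourier identity
    intro τ
    have hpm : ∀ ξ t : ℝ, phase τ (ξ - t) = phase τ ξ * phase τ (-t) := phase_sub τ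
    have hcont := phase_continuous τ
    set I : ℂ := ∫ u : ℝ, phase τ u * ((Real.pi * max 0 (ε ^ 2 - (u - a) ^ 2) : ℝ) : ℂ)
      with hI
    have hslice : (∫ z in Metric.ball y ε, phase τ ⟪xhat, z⟫) = I := by
      rw [hI, ha]
      exact slice_lem xhat hx y ε hε (phase τ) hcont.measurable 1 (fun u => (phase_norm τ u).le)
    have hLHS : φeps τ = ((C : ℝ) : ℂ)⁻¹ *
        (I * ∫ t in Set.Ioo tmin tmax, phase τ (-t)) := by
      rw [hφ τ]
      congr 1
      rw [← integral_const_mul]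
      refine setIntegral_congr_fun measurableSet_Ioo fun t _ => ?_
      simp_rw [hpm _ t]
      rw [integral_mul_const, hslice]
    -- now the right-hand side
    set lo : ℝ := a - ε - tmax with hlo
    set hi : ℝ := a + ε - tmin with hhi
    have s1 : (∫ ξ : ℝ, phase τ ξ * (g ξ : ℂ)) =
        ∫ ξ in Set.Icc lo hi, phase τ ξ * (g ξ : ℂ) := by
      refine (setIntegral_eq_integral_of_forall_compl_eq_zero fun ξ hξ => ?_).symm
      rw [gvanish ξ (fun hm => hξ (Set.Ioo_subset_Icc_self hm)), Complex.ofReal_zero, mul_zero]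
    have hptw : ∀ ξ : ℝ, phase τ ξ * (g ξ : ℂ) = ((C : ℝ) : ℂ)⁻¹ *
        ∫ s in Set.Ioo tmin tmax,
          phase τ ξ * ((Real.pi * max 0 (ε ^ 2 - (ξ + s - a) ^ 2) : ℝ) : ℂ) := by
      intro ξ
      have hshift : (∫ t in Set.Ioo (ξ + tmin) (ξ + tmax),
            Real.pi * max 0 (ε ^ 2 - (t - a) ^ 2)) =
          ∫ s in Set.Ioo tmin tmax, Real.pi * max 0 (ε ^ 2 - (ξ + s - a) ^ 2) := by
        rw [show (∫ t in Set.Ioo (ξ + tmin) (ξ + tmax),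
              Real.pi * max 0 (ε ^ 2 - (t - a) ^ 2)) =
            ∫ t in (ξ + tmin)..(ξ + tmax), Real.pi * max 0 (ε ^ 2 - (t - a) ^ 2) by
          rw [intervalIntegral.integral_of_le (by linarith), integral_Ioc_eq_integral_Ioo]]
        rw [show (∫ s in Set.Ioo tmin tmax,
              Real.pi * max 0 (ε ^ 2 - (ξ + s - a) ^ 2)) =
            ∫ s in tmin..tmax, Real.pi * max 0 (ε ^ 2 - (ξ + s - a) ^ 2) by
          rw [intervalIntegral.integral_of_le ht.le, integral_Ioc_eq_integral_Ioo]]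
        exact (intervalIntegral.integral_comp_add_left
          (fun t => Real.pi * max 0 (ε ^ 2 - (t - a) ^ 2)) ξ).symm
      have hcast : ((∫ s in Set.Ioo tmin tmax,
            Real.pi * max 0 (ε ^ 2 - (ξ + s - a) ^ 2) : ℝ) : ℂ) =
          ∫ s in Set.Ioo tmin tmax,
            ((Real.pi * max 0 (ε ^ 2 - (ξ + s - a) ^ 2) : ℝ) : ℂ) := integral_ofReal.symm
      rw [hg ξ, hshift, Complex.ofReal_mul, Complex.ofReal_inv, hcast, integral_const_mul]
      ring
    have s2 : (∫ ξ in Set.Icc lo hi, phase τ ξ * (g ξ : ℂ)) = ((C : ℝ) : ℂ)⁻¹ *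
        ∫ ξ in Set.Icc lo hi, ∫ s in Set.Ioo tmin tmax,
          phase τ ξ * ((Real.pi * max 0 (ε ^ 2 - (ξ + s - a) ^ 2) : ℝ) : ℂ) := by
      simp_rw [hptw]
      rw [integral_const_mul]
    haveI i1 : IsFiniteMeasure (volume.restrict (Set.Icc lo hi)) :=
      ⟨by rw [Measure.restrict_apply_univ]; exact measure_Icc_lt_top⟩
    haveI i2 : IsFiniteMeasure (volume.restrict (Set.Ioo tmin tmax)) :=
      ⟨by rw [Measure.restrict_apply_univ]; exact measure_Ioo_lt_top⟩
    have hswap : (∫ ξ in Set.Icc lo hi, ∫ s in Set.Ioo tmin tmax,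
          phase τ ξ * ((Real.pi * max 0 (ε ^ 2 - (ξ + s - a) ^ 2) : ℝ) : ℂ)) =
        ∫ s in Set.Ioo tmin tmax, ∫ ξ in Set.Icc lo hi,
          phase τ ξ * ((Real.pi * max 0 (ε ^ 2 - (ξ + s - a) ^ 2) : ℝ) : ℂ) := by
      apply integral_integral_swap
      have hcont2 : Continuous (Function.uncurry fun ξ s : ℝ =>
          phase τ ξ * ((Real.pi * max 0 (ε ^ 2 - (ξ + s - a) ^ 2) : ℝ) : ℂ)) := by
        refine (hcont.comp continuous_fst).mul (Complex.continuous_ofReal.comp ?_)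
        exact hAcont.comp (continuous_fst.add continuous_snd)
      refine (integrable_const (Real.pi * ε ^ 2)).mono' hcont2.aestronglyMeasurable ?_
      refine Filter.Eventually.of_forall fun p => ?_
      rw [Function.uncurry, norm_mul, phase_norm, one_mul, Complex.norm_real,
        Real.norm_eq_abs, _root_.abs_of_nonneg (hAnn _)]
      exact hAbd _
    have s3 : (∫ s in Set.Ioo tmin tmax, ∫ ξ in Set.Icc lo hi,
          phase τ ξ * ((Real.pi * max 0 (ε ^ 2 - (ξ + s - a) ^ 2) : ℝ) : ℂ)) =
        (∫ s in Set.Ioo tmin tmax, phase τ (-s)) * I := by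
      rw [← integral_mul_const]
      refine setIntegral_congr_fun measurableSet_Ioo fun s hs => ?_
      rcases Set.mem_Ioo.mp hs with ⟨hs1, hs2⟩
      have hvan : ∀ ξ : ℝ, ξ ∉ Set.Icc lo hi →
          phase τ ξ * ((Real.pi * max 0 (ε ^ 2 - (ξ + s - a) ^ 2) : ℝ) : ℂ) = 0 := by
        intro ξ hξ
        rw [Set.mem_Icc, not_and_or, not_le, not_le] at hξ
        have hz : Real.pi * max 0 (ε ^ 2 - (ξ + s - a) ^ 2) = 0 := by
          rcases hξ with hlt | hlt
          · rw [max_eq_left (by nlinarith [hlo, hhi]), mul_zero]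
          · rw [max_eq_left (by nlinarith [hlo, hhi]), mul_zero]
        rw [hz, Complex.ofReal_zero, mul_zero]
      rw [setIntegral_eq_integral_of_forall_compl_eq_zero hvan]
      have htr := integral_add_right_eq_self (μ := volume)
        (fun u => phase τ (u - s) * ((Real.pi * max 0 (ε ^ 2 - (u - a) ^ 2) : ℝ) : ℂ)) s
      simp only [add_sub_cancel_right] at htr
      rw [htr]
      simp_rw [hpm _ s]
      rw [show (fun u : ℝ => phase τ u * phase τ (-s) *
            ((Real.pi * max 0 (ε ^ 2 - (u - a) ^ 2) : ℝ) : ℂ)) =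
          fun u : ℝ => phase τ (-s) *
            (phase τ u * ((Real.pi * max 0 (ε ^ 2 - (u - a) ^ 2) : ℝ) : ℂ))
        from funext fun u => by ring]
      rw [integral_const_mul, ← hI, mul_comm]
    rw [hLHS, s1, s2, hswap, s3]
    ring
  · -- positivity
    intro ξ hξ
    rcases Set.mem_Ioo.mp hξ with ⟨hξ1, hξ2⟩
    refine mul_pos (Real.sqrt_pos.mpr (by positivity)) ?_
    rw [hg ξ]
    refine mul_pos (inv_pos.mpr hCpos) ?_
    have hnn : (0 : ℝ → ℝ) ≤ᵐ[volume.restrict (Set.Ioo (ξ + tmin) (ξ + tmax))]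
        fun t => Real.pi * max 0 (ε ^ 2 - (t - a) ^ 2) :=
      Filter.Eventually.of_forall fun t => hAnn t
    have hintA : IntegrableOn (fun t => Real.pi * max 0 (ε ^ 2 - (t - a) ^ 2))
        (Set.Ioo (ξ + tmin) (ξ + tmax)) volume := by
      refine Measure.integrableOn_of_bounded (M := Real.pi * ε ^ 2) measure_Ioo_lt_top.ne
        hAcont.aestronglyMeasurable ?_
      refine Filter.Eventually.of_forall fun t => ?_
      rw [Real.norm_eq_abs, _root_.abs_of_nonneg (hAnn t)]
      exact hAbd t
    rw [setIntegral_pos_iff_support_of_nonneg_ae hnn hintA]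
    have hsub : Set.Ioo (max (a - ε) (ξ + tmin)) (min (a + ε) (ξ + tmax)) ⊆
        (Function.support fun t => Real.pi * max 0 (ε ^ 2 - (t - a) ^ 2)) ∩
          Set.Ioo (ξ + tmin) (ξ + tmax) := by
      intro t htm
      rcases Set.mem_Ioo.mp htm with ⟨h1, h2⟩
      have hl1 : a - ε < t := lt_of_le_of_lt (le_max_left _ _) h1
      have hl2 : ξ + tmin < t := lt_of_le_of_lt (le_max_right _ _) h1
      have hr1 : t < a + ε := lt_of_lt_of_le h2 (min_le_left _ _)
      have hr2 : t < ξ + tmax := lt_of_lt_of_le h2 (min_le_right _ _)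
      refine ⟨?_, Set.mem_Ioo.mpr ⟨hl2, hr2⟩⟩
      have hpos : 0 < ε ^ 2 - (t - a) ^ 2 := by nlinarith
      exact ne_of_gt (mul_pos Real.pi_pos (lt_max_of_lt_right hpos))
    refine lt_of_lt_of_le ?_ (measure_mono hsub)
    rw [Real.volume_Ioo]
    refine ENNReal.ofReal_pos.mpr (sub_pos.mpr ?_)
    refine max_lt (lt_min (by linarith) (by linarith)) (lt_min (by linarith) (by linarith))
  · -- vanishing
    intro ξ hξ
    rw [gvanish ξ hξ, mul_zero]

end
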